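/- Let h > 0, μ > 0, φ ∈ ℝ and set ε = μh²/4. Let θ : ℤ → ℝ satisfy sin((θₙ₊₁ − 2θₙ + θₙ₋₁)/4) + ε sin((θₙ₊₁ + 2θₙ + θₙ₋₁)/4 − φ) = 0 for all n ∈ ℤ. Let Λ = cos((θₙ₊₁ − θₙ)/2) + ε cos((θₙ₊₁ + θₙ)/2 − φ) (independent of n), and assume Λ ≠ 0 and cos((θₙ₊₁ − θₙ₋₁)/4) ≠ 0 for all n. Set Θₙ = (θₙ₊₁ + θₙ)/2, κₙ = (2/h) tan((θₙ₊₁ − θₙ₋₁)/4), let γ : ℤ → ℝ² satisfy γₙ₊₁ = γₙ + h·(cos Θₙ, sin Θₙ), and define uₙ = ⟨(sin φ, −cos φ), γₙ⟩ and sin Ψₙ = cos(Θₙ − φ). Then there exist constants A, B ∈ ℝ such that for all n ∈ ℤ, κₙ = (μ/Λ) uₙ + A and sin Ψₙ = (μ/(2Λ)) uₙ₊₁ uₙ + A (uₙ₊₁ + uₙ)/2 + B. -/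

import Mathlib

lemma key1 (A B C D ε : ℝ)
    (e1 : Real.sin (A - D) + ε * Real.sin (A + C) = 0)
    (e2 : Real.sin (D - B) + ε * Real.sin (C - B) = 0) :
    (Real.cos D + ε * Real.cos C) * Real.sin (A - B)
      + 2 * ε * Real.sin C * (Real.cos A * Real.cos B) = 0 := by
  have pD := Real.sin_sq_add_cos_sq D
  simp only [Real.sin_sub, Real.sin_add] at e1 e2 ⊢
  linear_combination
    (Real.cos D * (Real.cos D * Real.cos B + Real.sin D * Real.sin B)
      - ε * Real.sin D * (Real.sin C * Real.cos B - Real.cos C * Real.sin B)) * e1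
    + (Real.cos D * (Real.cos A * Real.cos D + Real.sin A * Real.sin D)
      + ε * Real.sin D * (Real.sin A * Real.cos C + Real.cos A * Real.sin C)) * e2
    + (Real.cos D * (Real.cos A * Real.sin B - Real.sin A * Real.cos B)
      + ε * (Real.cos C * (Real.cos A * Real.sin B - Real.sin A * Real.cos B)
        - 2 * Real.cos A * Real.cos B * Real.sin C)) * pD

lemma key2 (A C : ℝ) :
    Real.cos A * (Real.cos (C + 2 * A) - Real.cos C)
      + Real.sin A * (Real.sin (C + 2 * A) + Real.sin C) = 0 := by
  have pA := Real.sin_sq_add_cos_sq A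
  have h2 : C + 2 * A = C + A + A := by ring
  rw [h2, Real.cos_add (C + A), Real.sin_add (C + A), Real.cos_add, Real.sin_add]
  linear_combination (Real.cos C * Real.cos A - Real.sin C * Real.sin A) * pA

theorem discrete_elastica_quadratic_sin (h μ φ : ℝ) (hh : 0 < h) (hμ : 0 < μ)
    (ε : ℝ) (hε : ε = μ * h ^ 2 / 4)
    (θ : ℤ → ℝ)
    (hpend : ∀ n : ℤ,
      Real.sin ((θ (n + 1) - 2 * θ n + θ (n - 1)) / 4)
        + ε * Real.sin ((θ (n + 1) + 2 * θ n + θ (n - 1)) / 4 - φ) = 0)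
    (Λ : ℝ)
    (hΛ : ∀ n : ℤ,
      Real.cos ((θ (n + 1) - θ n) / 2)
        + ε * Real.cos ((θ (n + 1) + θ n) / 2 - φ) = Λ)
    (hΛ0 : Λ ≠ 0)
    (hcos : ∀ n : ℤ, Real.cos ((θ (n + 1) - θ (n - 1)) / 4) ≠ 0)
    (Θ : ℤ → ℝ) (hΘ : ∀ n : ℤ, Θ n = (θ (n + 1) + θ n) / 2)
    (κ : ℤ → ℝ) (hκ : ∀ n : ℤ, κ n = 2 / h * Real.tan ((θ (n + 1) - θ (n - 1)) / 4))
    (γ : ℤ → ℝ × ℝ)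
    (hγ : ∀ n : ℤ, γ (n + 1) = γ n + h • ((Real.cos (Θ n), Real.sin (Θ n)) : ℝ × ℝ))
    (u : ℤ → ℝ) (hu : ∀ n : ℤ, u n = Real.sin φ * (γ n).1 - Real.cos φ * (γ n).2)
    (sinΨ : ℤ → ℝ) (hΨ : ∀ n : ℤ, sinΨ n = Real.cos (Θ n - φ)) :
    ∃ A B : ℝ, ∀ n : ℤ,
      κ n = μ / Λ * u n + A ∧
      sinΨ n = μ / (2 * Λ) * u (n + 1) * u n + A * (u (n + 1) + u n) / 2 + B := by
  have hne : h ≠ 0 := hh.ne'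
  -- difference of u
  have hud : ∀ n : ℤ, u (n + 1) - u n = -(h * Real.sin (Θ n - φ)) := by
    intro n
    rw [hu (n + 1), hu n, hγ n, Real.sin_sub]
    simp only [Prod.fst_add, Prod.snd_add, Prod.smul_fst, Prod.smul_snd, smul_eq_mul]
    ring
  -- difference of κ
  have hκd : ∀ n : ℤ, κ (n + 1) - κ n = μ / Λ * (u (n + 1) - u n) := by
    intro n
    set A := (θ (n + 2) - θ n) / 4 with hA
    set B := (θ (n + 1) - θ (n - 1)) / 4 with hB
    set C := (θ (n + 1) + θ n) / 2 - φ with hC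
    set D := (θ (n + 1) - θ n) / 2 with hD
    have hcA : Real.cos A ≠ 0 := by
      have := hcos (n + 1)
      rw [show (n + 1 + 1 : ℤ) = n + 2 by ring, show (n + 1 - 1 : ℤ) = n by ring,
        ← hA] at this
      exact this
    have hcB : Real.cos B ≠ 0 := by have := hcos n; rwa [← hB] at this
    have e1 : Real.sin (A - D) + ε * Real.sin (A + C) = 0 := by
      have hp := hpend (n + 1)
      rw [show (n + 1 + 1 : ℤ) = n + 2 by ring, show (n + 1 - 1 : ℤ) = n by ring] at hp
      rw [show (θ (n + 2) - 2 * θ (n + 1) + θ n) / 4 = A - D by rw [hA, hD]; ring,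
        show (θ (n + 2) + 2 * θ (n + 1) + θ n) / 4 - φ = A + C by rw [hA, hC]; ring] at hp
      exact hp
    have e2 : Real.sin (D - B) + ε * Real.sin (C - B) = 0 := by
      have hp := hpend n
      rw [show (θ (n + 1) - 2 * θ n + θ (n - 1)) / 4 = D - B by rw [hB, hD]; ring,
        show (θ (n + 1) + 2 * θ n + θ (n - 1)) / 4 - φ = C - B by rw [hB, hC]; ring] at hp
      exact hp
    have hk := key1 A B C D ε e1 e2
    have hΛn : Real.cos D + ε * Real.cos C = Λ := by rw [hD, hC]; exact hΛ n
    have key' : Λ * Real.sin (A - B) = -(2 * ε) * Real.sin C * (Real.cos A * Real.cos B) := by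
      linear_combination hk - Real.sin (A - B) * hΛn
    have hκ1 : κ (n + 1) = 2 / h * Real.tan A := by
      have := hκ (n + 1)
      rwa [show (n + 1 + 1 : ℤ) = n + 2 by ring, show (n + 1 - 1 : ℤ) = n by ring,
        ← hA] at this
    have hκ0 : κ n = 2 / h * Real.tan B := by rw [hκ n, ← hB]
    rw [hκ1, hκ0, hud n, Real.tan_eq_sin_div_cos, Real.tan_eq_sin_div_cos, hΘ n, ← hC]
    rw [Real.sin_sub] at key'
    field_simp
    linear_combination 2 * key'
      - 4 * Real.sin C * (Real.cos A * Real.cos B) * hε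
  -- linear part
  set A₀ := κ 0 - μ / Λ * u 0 with hA₀
  have hlin : ∀ n : ℤ, κ n = μ / Λ * u n + A₀ := by
    intro n
    induction n using Int.induction_on with
    | zero => rw [hA₀]; ring
    | succ k ih => linear_combination hκd k + ih
    | pred k ih =>
      have hd := hκd (-(k : ℤ) - 1)
      rw [show (-(k : ℤ) - 1 + 1) = -k by ring] at hd
      linear_combination ih - hd
  -- quadratic difference
  have hQd : ∀ n : ℤ,
      sinΨ (n + 1) - (μ / (2 * Λ) * u (n + 2) * u (n + 1) + A₀ * (u (n + 2) + u (n + 1)) / 2)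
        = sinΨ n - (μ / (2 * Λ) * u (n + 1) * u n + A₀ * (u (n + 1) + u n) / 2) := by
    intro n
    set A := (θ (n + 2) - θ n) / 4 with hA
    set C := Θ n - φ with hC
    have hcA : Real.cos A ≠ 0 := by
      have := hcos (n + 1)
      rw [show (n + 1 + 1 : ℤ) = n + 2 by ring, show (n + 1 - 1 : ℤ) = n by ring,
        ← hA] at this
      exact this
    have hΘ1 : Θ (n + 1) - φ = C + 2 * A := by
      rw [hΘ (n + 1), show (n + 1 + 1 : ℤ) = n + 2 by ring, hC, hΘ n, hA]; ring
    have hκ1 : κ (n + 1) = 2 / h * Real.tan A := by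
      have := hκ (n + 1)
      rwa [show (n + 1 + 1 : ℤ) = n + 2 by ring, show (n + 1 - 1 : ℤ) = n by ring,
        ← hA] at this
    have hu1 : u (n + 2) - u (n + 1) = -(h * Real.sin (C + 2 * A)) := by
      have := hud (n + 1)
      rwa [show (n + 1 + 1 : ℤ) = n + 2 by ring, hΘ1] at this
    have hu0 : u (n + 1) - u n = -(h * Real.sin C) := by
      have := hud n; rwa [← hC] at this
    have hl1 : κ (n + 1) = μ / Λ * u (n + 1) + A₀ := hlin (n + 1)
    have hk2 := key2 A C
    have htan : Real.tan A = Real.sin A / Real.cos A := Real.tan_eq_sin_div_cos A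
    rw [hΨ (n + 1), hΨ n, hΘ1, ← hC]
    rw [htan] at hκ1
    -- express the u-products difference via κ (n+1)
    have hdiff : μ / (2 * Λ) * u (n + 2) * u (n + 1) + A₀ * (u (n + 2) + u (n + 1)) / 2
        - (μ / (2 * Λ) * u (n + 1) * u n + A₀ * (u (n + 1) + u n) / 2)
        = κ (n + 1) / 2 * (u (n + 2) - u n) := by
      rw [hl1]; field_simp; ring
    have hsum : u (n + 2) - u n = -(h * Real.sin (C + 2 * A)) - h * Real.sin C := by
      linear_combination hu1 + hu0
    have : Real.cos (C + 2 * A) - Real.cos C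
        = κ (n + 1) / 2 * (u (n + 2) - u n) := by
      rw [hsum, hκ1]
      field_simp
      linear_combination hk2
    linear_combination this - hdiff
  set B₀ := sinΨ 0 - (μ / (2 * Λ) * u 1 * u 0 + A₀ * (u 1 + u 0) / 2) with hB₀
  refine ⟨A₀, B₀, fun n => ⟨hlin n, ?_⟩⟩
  induction n using Int.induction_on with
  | zero => rw [hB₀]; norm_num
  | succ k ih =>
    have := hQd k
    rw [show ((k : ℤ) + 1 + 1) = k + 2 by ring]
    linear_combination this + ih
  | pred k ih =>
    have hd := hQd (-(k : ℤ) - 1)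
    rw [show (-(k : ℤ) - 1 + 1) = -k by ring, show (-(k : ℤ) - 1 + 2) = -k + 1 by ring] at hd
    rw [show (-(k : ℤ) - 1 + 1) = -k by ring]
    linear_combination ih - hd
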